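/- arXiv:2412.06114 — 2 statements merged into one kernel-verified Lean document; each statement's English description precedes it below -/
import Mathlib

section
/- Survivor representation in the Markov case: for every t ≥ 0, 1 − F(t) = exp{−Λ₁(t)} + ∫₀ᵗ exp{−Λ⋆(s) − Λ₀(s) − (Λ₁(t) − Λ₁(s))} (λ₁(s) − λ₀(s)) ds. -/
open MeasureTheory ProbabilityTheory Filter Set

/-- Cumulative hazard `Λ(t) = ∫₀ᵗ λ(u) du`. -/
noncomputable def cumHaz (lam : ℝ → ℝ) (t : ℝ) : ℝ := ∫ u in (0:ℝ)..t, lam u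

/-- Post-intermediate cumulative hazard `Λ₁(t,s) = ∫ₛᵗ λ₁(u,s) du`. -/
noncomputable def cumHaz1 (lam1 : ℝ → ℝ → ℝ) (t s : ℝ) : ℝ := ∫ u in s..t, lam1 u s

/-- The counterfactual cumulative incidence function
`F(t) = ∫₀ᵗ e^{−Λ₀(s)−Λ⋆(s)} λ₀(s) ds + ∫₀ᵗ e^{−Λ₀(s)−Λ⋆(s)} λ⋆(s) (1 − e^{−Λ₁(t,s)}) ds`. -/
noncomputable def cif (lamS lam0 : ℝ → ℝ) (lam1 : ℝ → ℝ → ℝ) (t : ℝ) : ℝ :=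
  (∫ s in (0:ℝ)..t, Real.exp (-cumHaz lam0 s - cumHaz lamS s) * lam0 s) +
  ∫ s in (0:ℝ)..t, Real.exp (-cumHaz lam0 s - cumHaz lamS s) * lamS s *
    (1 - Real.exp (-cumHaz1 lam1 t s))


noncomputable def extHaz (f : ℝ → ℝ) (u : ℝ) : ℝ := f (max u 0)

lemma extHaz_cont {f : ℝ → ℝ} (hf : ContinuousOn f (Set.Ici 0)) : Continuous (extHaz f) :=
  hf.comp_continuous (continuous_id.max continuous_const) (fun x => Set.mem_Ici.mpr (le_max_right _ _))

lemma extHaz_eq {f : ℝ → ℝ} {s : ℝ} (hs : 0 ≤ s) : extHaz f s = f s := by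
  simp [extHaz, max_eq_left hs]

lemma cumHaz_ext {f : ℝ → ℝ} {s : ℝ} (hs : 0 ≤ s) : cumHaz f s = cumHaz (extHaz f) s := by
  unfold cumHaz
  refine intervalIntegral.integral_congr (fun u hu => ?_)
  rw [Set.uIcc_of_le hs] at hu
  exact (extHaz_eq hu.1).symm

lemma cumHaz_hasDerivAt {f : ℝ → ℝ} (hf : Continuous f) (s : ℝ) :
    HasDerivAt (cumHaz f) (f s) s :=
  intervalIntegral.integral_hasDerivAt_right (hf.intervalIntegrable _ _)
    (hf.stronglyMeasurableAtFilter _ _) hf.continuousAt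

lemma key' (f H : ℝ → ℝ) (hf : Continuous f) (hH : ∀ s, HasDerivAt H (f s) s) (t : ℝ) :
    ∫ s in (0:ℝ)..t, Real.exp (H s) * f s = Real.exp (H t) - Real.exp (H 0) := by
  have hHc : Continuous H := continuous_iff_continuousAt.mpr (fun s => (hH s).continuousAt)
  exact intervalIntegral.integral_eq_sub_of_hasDerivAt (fun s _ => (hH s).exp)
    (((Real.continuous_exp.comp hHc).mul hf).intervalIntegrable _ _)

lemma main_abstract (g0 gS g1 : ℝ → ℝ) (h0 : Continuous g0) (hS : Continuous gS)
    (h1 : Continuous g1) (t : ℝ) :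
    1 - ((∫ s in (0:ℝ)..t, Real.exp (-cumHaz g0 s - cumHaz gS s) * g0 s) +
      ∫ s in (0:ℝ)..t, Real.exp (-cumHaz g0 s - cumHaz gS s) * gS s *
        (1 - Real.exp (-(cumHaz g1 t - cumHaz g1 s)))) =
    Real.exp (-cumHaz g1 t) +
      ∫ s in (0:ℝ)..t, Real.exp (-cumHaz gS s - cumHaz g0 s -
        (cumHaz g1 t - cumHaz g1 s)) * (g1 s - g0 s) := by
  -- continuity of the cumulative hazards
  have hC0 : Continuous (cumHaz g0) :=
    continuous_iff_continuousAt.mpr fun s => (cumHaz_hasDerivAt h0 s).continuousAt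
  have hCS : Continuous (cumHaz gS) :=
    continuous_iff_continuousAt.mpr fun s => (cumHaz_hasDerivAt hS s).continuousAt
  have hC1 : Continuous (cumHaz g1) :=
    continuous_iff_continuousAt.mpr fun s => (cumHaz_hasDerivAt h1 s).continuousAt
  set H0 : ℝ → ℝ := fun s => -cumHaz g0 s - cumHaz gS s with hH0def
  set H : ℝ → ℝ := fun s => -cumHaz g0 s - cumHaz gS s + cumHaz g1 s with hHdef
  have hH0c : Continuous H0 := (hC0.neg).sub hCS
  have hHc : Continuous H := hH0c.add hC1
  have hE0 : Continuous fun s => Real.exp (H0 s) := Real.continuous_exp.comp hH0c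
  have hE : Continuous fun s => Real.exp (H s) := Real.continuous_exp.comp hHc
  -- integrabilities
  have i1 : IntervalIntegrable (fun s => Real.exp (H0 s) * g0 s) volume 0 t :=
    (hE0.mul h0).intervalIntegrable _ _
  have i2 : IntervalIntegrable (fun s => Real.exp (H0 s) * gS s) volume 0 t :=
    (hE0.mul hS).intervalIntegrable _ _
  have i3 : IntervalIntegrable (fun s => Real.exp (H s) * g0 s) volume 0 t :=
    (hE.mul h0).intervalIntegrable _ _
  have i4 : IntervalIntegrable (fun s => Real.exp (H s) * gS s) volume 0 t :=
    (hE.mul hS).intervalIntegrable _ _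
  have i5 : IntervalIntegrable (fun s => Real.exp (H s) * g1 s) volume 0 t :=
    (hE.mul h1).intervalIntegrable _ _
  have hz : ∀ f : ℝ → ℝ, cumHaz f 0 = 0 := fun f => intervalIntegral.integral_same
  -- FTC facts
  have E1 : ∫ s in (0:ℝ)..t, Real.exp (H0 s) * (-g0 s - gS s) = Real.exp (H0 t) - 1 := by
    have := key' (fun s => -g0 s - gS s) H0 ((h0.neg).sub hS)
      (fun s => ((cumHaz_hasDerivAt h0 s).neg).sub (cumHaz_hasDerivAt hS s)) t
    simpa [hH0def, hz] using this
  have E2 : ∫ s in (0:ℝ)..t, Real.exp (H s) * (-g0 s - gS s + g1 s) = Real.exp (H t) - 1 := by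
    have := key' (fun s => -g0 s - gS s + g1 s) H (((h0.neg).sub hS).add h1)
      (fun s => (((cumHaz_hasDerivAt h0 s).neg).sub (cumHaz_hasDerivAt hS s)).add
        (cumHaz_hasDerivAt h1 s)) t
    simpa [hHdef, hz] using this
  -- split E1
  have F1 : (∫ s in (0:ℝ)..t, Real.exp (H0 s) * g0 s) +
      (∫ s in (0:ℝ)..t, Real.exp (H0 s) * gS s) = 1 - Real.exp (H0 t) := by
    have : ∫ s in (0:ℝ)..t, Real.exp (H0 s) * (-g0 s - gS s)
        = -((∫ s in (0:ℝ)..t, Real.exp (H0 s) * g0 s) +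
            (∫ s in (0:ℝ)..t, Real.exp (H0 s) * gS s)) := by
      rw [← intervalIntegral.integral_add i1 i2, ← intervalIntegral.integral_neg]
      exact intervalIntegral.integral_congr (fun s _ => by ring)
    rw [this] at E1; linarith
  -- split E2
  have F2 : (∫ s in (0:ℝ)..t, Real.exp (H s) * g1 s)
      - (∫ s in (0:ℝ)..t, Real.exp (H s) * g0 s)
      - (∫ s in (0:ℝ)..t, Real.exp (H s) * gS s) = Real.exp (H t) - 1 := by
    have : ∫ s in (0:ℝ)..t, Real.exp (H s) * (-g0 s - gS s + g1 s)
        = (∫ s in (0:ℝ)..t, Real.exp (H s) * g1 s)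
          - (∫ s in (0:ℝ)..t, Real.exp (H s) * g0 s)
          - (∫ s in (0:ℝ)..t, Real.exp (H s) * gS s) := by
      rw [← intervalIntegral.integral_sub i5 i3, ← intervalIntegral.integral_sub (i5.sub i3) i4]
      exact intervalIntegral.integral_congr (fun s _ => by ring)
    rw [this] at E2; exact E2
  -- rewrite B
  have hB : (∫ s in (0:ℝ)..t, Real.exp (-cumHaz g0 s - cumHaz gS s) * gS s *
        (1 - Real.exp (-(cumHaz g1 t - cumHaz g1 s))))
      = (∫ s in (0:ℝ)..t, Real.exp (H0 s) * gS s)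
        - Real.exp (-cumHaz g1 t) * (∫ s in (0:ℝ)..t, Real.exp (H s) * gS s) := by
    rw [← intervalIntegral.integral_const_mul, ← intervalIntegral.integral_sub i2
      ((i4.const_mul _))]
    refine intervalIntegral.integral_congr (fun s _ => ?_)
    have h1 : Real.exp (H0 s) * Real.exp (-(cumHaz g1 t - cumHaz g1 s))
        = Real.exp (-cumHaz g1 t) * Real.exp (H s) := by
      rw [← Real.exp_add, ← Real.exp_add]; congr 1; simp only [hH0def, hHdef]; ring
    simp only [hH0def]
    linear_combination (-(gS s)) * h1
  -- rewrite C
  have hC : (∫ s in (0:ℝ)..t, Real.exp (-cumHaz gS s - cumHaz g0 s -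
        (cumHaz g1 t - cumHaz g1 s)) * (g1 s - g0 s))
      = Real.exp (-cumHaz g1 t) * ((∫ s in (0:ℝ)..t, Real.exp (H s) * g1 s)
        - (∫ s in (0:ℝ)..t, Real.exp (H s) * g0 s)) := by
    rw [← intervalIntegral.integral_sub i5 i3, ← intervalIntegral.integral_const_mul]
    refine intervalIntegral.integral_congr (fun s _ => ?_)
    have h1 : Real.exp (-cumHaz gS s - cumHaz g0 s - (cumHaz g1 t - cumHaz g1 s))
        = Real.exp (-cumHaz g1 t) * Real.exp (H s) := by
      rw [← Real.exp_add]; congr 1; simp only [hHdef]; ring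
    rw [h1]; ring
  have F3 : Real.exp (-cumHaz g1 t) * Real.exp (H t) = Real.exp (H0 t) := by
    rw [← Real.exp_add]; congr 1; simp only [hH0def, hHdef]; ring
  rw [hB, hC]
  simp only [hH0def]
  linear_combination (-1) * F1 - Real.exp (-cumHaz g1 t) * F2 - F3

/-- survivor representation in the Markov case, where
`λ₁(t,s) = λ₁(t)` and `Λ₁(t) = ∫₀ᵗ λ₁(u) du`. -/
theorem cif_survivor_markov (lamS lam0 lam1 : ℝ → ℝ)
    (hScont : ContinuousOn lamS (Set.Ici 0))
    (h0cont : ContinuousOn lam0 (Set.Ici 0))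
    (h1cont : ContinuousOn lam1 (Set.Ici 0))
    (hSnn : ∀ t ∈ Set.Ici (0:ℝ), 0 ≤ lamS t)
    (h0nn : ∀ t ∈ Set.Ici (0:ℝ), 0 ≤ lam0 t)
    (h1nn : ∀ t ∈ Set.Ici (0:ℝ), 0 ≤ lam1 t) :
    ∀ t : ℝ, 0 ≤ t →
      1 - cif lamS lam0 (fun u _ => lam1 u) t =
        Real.exp (-cumHaz lam1 t) +
          ∫ s in (0:ℝ)..t,
            Real.exp (-cumHaz lamS s - cumHaz lam0 s - (cumHaz lam1 t - cumHaz lam1 s)) *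
              (lam1 s - lam0 s) := by
  intro t ht
  have hIcc : Set.uIcc (0:ℝ) t = Set.Icc 0 t := Set.uIcc_of_le ht
  set g0 := extHaz lam0 with hg0def
  set gS := extHaz lamS with hgSdef
  set g1 := extHaz lam1 with hg1def
  have hg0 : Continuous g0 := extHaz_cont h0cont
  have hgS : Continuous gS := extHaz_cont hScont
  have hg1 : Continuous g1 := extHaz_cont h1cont
  -- congruence facts for s in [0, t]
  have hcong : ∀ s ∈ Set.Icc (0:ℝ) t,
      cumHaz lam0 s = cumHaz g0 s ∧ cumHaz lamS s = cumHaz gS s ∧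
      cumHaz lam1 s = cumHaz g1 s ∧ lam0 s = g0 s ∧ lamS s = gS s ∧ lam1 s = g1 s := by
    intro s hs
    exact ⟨cumHaz_ext hs.1, cumHaz_ext hs.1, cumHaz_ext hs.1,
      (extHaz_eq hs.1).symm, (extHaz_eq hs.1).symm, (extHaz_eq hs.1).symm⟩
  have hcum1 : ∀ s ∈ Set.Icc (0:ℝ) t,
      cumHaz1 (fun u _ => lam1 u) t s = cumHaz g1 t - cumHaz g1 s := by
    intro s hs
    have h1 : cumHaz1 (fun u _ => lam1 u) t s = ∫ u in s..t, g1 u := by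
      refine intervalIntegral.integral_congr (fun u hu => ?_)
      rw [Set.uIcc_of_le hs.2] at hu
      exact (extHaz_eq (le_trans hs.1 hu.1)).symm
    rw [h1, cumHaz, cumHaz,
      ← intervalIntegral.integral_interval_sub_left (hg1.intervalIntegrable 0 t)
        (hg1.intervalIntegrable 0 s)]
  have hA : (∫ s in (0:ℝ)..t, Real.exp (-cumHaz lam0 s - cumHaz lamS s) * lam0 s)
      = ∫ s in (0:ℝ)..t, Real.exp (-cumHaz g0 s - cumHaz gS s) * g0 s := by
    refine intervalIntegral.integral_congr (fun s hs => ?_)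
    rw [hIcc] at hs
    obtain ⟨e0, eS, e1, f0, fS, f1⟩ := hcong s hs
    rw [e0, eS, f0]
  have hB : (∫ s in (0:ℝ)..t, Real.exp (-cumHaz lam0 s - cumHaz lamS s) * lamS s *
        (1 - Real.exp (-cumHaz1 (fun u _ => lam1 u) t s)))
      = ∫ s in (0:ℝ)..t, Real.exp (-cumHaz g0 s - cumHaz gS s) * gS s *
        (1 - Real.exp (-(cumHaz g1 t - cumHaz g1 s))) := by
    refine intervalIntegral.integral_congr (fun s hs => ?_)
    rw [hIcc] at hs
    obtain ⟨e0, eS, e1, f0, fS, f1⟩ := hcong s hs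
    rw [e0, eS, fS, hcum1 s hs]
  have hC : (∫ s in (0:ℝ)..t,
        Real.exp (-cumHaz lamS s - cumHaz lam0 s - (cumHaz g1 t - cumHaz lam1 s)) *
          (lam1 s - lam0 s))
      = ∫ s in (0:ℝ)..t,
        Real.exp (-cumHaz gS s - cumHaz g0 s - (cumHaz g1 t - cumHaz g1 s)) *
          (g1 s - g0 s) := by
    refine intervalIntegral.integral_congr (fun s hs => ?_)
    rw [hIcc] at hs
    obtain ⟨e0, eS, e1, f0, fS, f1⟩ := hcong s hs
    rw [e0, eS, e1, f0, f1]
  rw [cif, cumHaz_ext (f := lam1) ht, hA, hB, hC]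
  exact main_abstract g0 gS g1 hg0 hgS hg1 t
end

section
/- Sign of the interventional indirect effect in the Markov case: suppose λ₁(t) ≥ λ₀(t) for all t ≥ 0 (the intermediate event increases the terminal hazard). Let λ⋆ᵃ and λ⋆ᵇ be two continuous nonnegative intermediate-event hazards with λ⋆ᵃ(t) ≤ λ⋆ᵇ(t) for all t ≥ 0, and let Fᵃ and Fᵇ be the corresponding counterfactual cumulative incidence functions (with the same λ₀ and λ₁). Then Fᵃ(t) ≤ Fᵇ(t) for all t ≥ 0. -/
open MeasureTheory ProbabilityTheory Filter Set

/-- Continuous extension of a hazard from `[0,∞)` to `ℝ`. -/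
noncomputable def exth (lam : ℝ → ℝ) : ℝ → ℝ := fun u => lam (max u 0)

lemma exth_cont {lam : ℝ → ℝ} (h : ContinuousOn lam (Set.Ici 0)) : Continuous (exth lam) :=
  h.comp_continuous (continuous_id.max continuous_const) fun x => le_max_right x 0

lemma exth_eq (lam : ℝ → ℝ) {u : ℝ} (hu : 0 ≤ u) : exth lam u = lam u := by
  simp [exth, max_eq_left hu]

lemma cumHaz_exth (lam : ℝ → ℝ) {s : ℝ} (hs : 0 ≤ s) :
    cumHaz (exth lam) s = cumHaz lam s := by
  unfold cumHaz
  refine intervalIntegral.integral_congr fun u hu => ?_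
  rw [Set.uIcc_of_le hs] at hu
  exact exth_eq lam hu.1

lemma hasDerivAt_cumHaz {lam : ℝ → ℝ} (h : Continuous lam) (x : ℝ) :
    HasDerivAt (cumHaz lam) (lam x) x :=
  (h.integral_hasStrictDerivAt 0 x).hasDerivAt

lemma continuous_cumHaz {lam : ℝ → ℝ} (h : Continuous lam) :
    Continuous (cumHaz lam) := by
  have : Differentiable ℝ (cumHaz lam) := fun x => (hasDerivAt_cumHaz h x).differentiableAt
  exact this.continuous

lemma cumHaz_zero (lam : ℝ → ℝ) : cumHaz lam 0 = 0 := by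
  simp [cumHaz]

/-- The key closed-form identity in the Markov case (for globally continuous hazards). -/
lemma cif_formula (lamS lam0 lam1 : ℝ → ℝ)
    (hS : Continuous lamS) (h0 : Continuous lam0) (h1 : Continuous lam1) (t : ℝ) :
    cif lamS lam0 (fun u _ => lam1 u) t
      = 1 - Real.exp (-(cumHaz lam1 t)) *
          (1 + ∫ s in (0:ℝ)..t, (lam1 s - lam0 s) *
            Real.exp (cumHaz lam1 s - cumHaz lam0 s - cumHaz lamS s)) := by
  set G0 := cumHaz lam0 with hG0
  set GS := cumHaz lamS with hGS
  set G1 := cumHaz lam1 with hG1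
  have hcG0 : Continuous G0 := continuous_cumHaz h0
  have hcGS : Continuous GS := continuous_cumHaz hS
  have hcG1 : Continuous G1 := continuous_cumHaz h1
  set E : ℝ → ℝ := fun s => Real.exp (-G0 s - GS s) with hE
  set ψ : ℝ → ℝ := fun s => Real.exp (G1 s - G0 s - GS s) with hψ
  have hcE : Continuous E := (((hcG0.neg).sub hcGS)).rexp
  have hcψ : Continuous ψ := ((hcG1.sub hcG0).sub hcGS).rexp
  -- cumHaz1 in the Markov case
  have hH1 : ∀ s : ℝ, cumHaz1 (fun u _ => lam1 u) t s = G1 t - G1 s := by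
    intro s
    unfold cumHaz1
    rw [hG1]
    unfold cumHaz
    exact (intervalIntegral.integral_interval_sub_left
      (h1.intervalIntegrable 0 t) (h1.intervalIntegrable 0 s)).symm
  -- FTC identity 1
  have hI1 : (∫ s in (0:ℝ)..t, E s * (lam0 s + lamS s)) = 1 - E t := by
    have hderiv : ∀ x ∈ Set.uIcc (0:ℝ) t,
        HasDerivAt (fun s => -E s) (E x * (lam0 x + lamS x)) x := by
      intro x _
      have h1' : HasDerivAt (fun s => -G0 s - GS s) (-lam0 x - lamS x) x :=
        ((hasDerivAt_cumHaz h0 x).neg).sub (hasDerivAt_cumHaz hS x)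
      have := (h1'.exp).neg
      exact this.congr_deriv (by simp only [hE]; ring)
    have hint : IntervalIntegrable (fun s => E s * (lam0 s + lamS s)) volume 0 t :=
      (hcE.mul (h0.add hS)).intervalIntegrable 0 t
    rw [intervalIntegral.integral_eq_sub_of_hasDerivAt hderiv hint]
    simp only [hE, hG0, hGS, cumHaz_zero, neg_zero, zero_sub, sub_zero, neg_neg, Real.exp_zero]
    ring
  -- FTC identity 2
  have hI2 : (∫ s in (0:ℝ)..t, ψ s * (lam1 s - lam0 s - lamS s)) = ψ t - 1 := by
    have hderiv : ∀ x ∈ Set.uIcc (0:ℝ) t,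
        HasDerivAt ψ (ψ x * (lam1 x - lam0 x - lamS x)) x := by
      intro x _
      have h1' : HasDerivAt (fun s => G1 s - G0 s - GS s) (lam1 x - lam0 x - lamS x) x :=
        ((hasDerivAt_cumHaz h1 x).sub (hasDerivAt_cumHaz h0 x)).sub (hasDerivAt_cumHaz hS x)
      exact h1'.exp
    have hint : IntervalIntegrable (fun s => ψ s * (lam1 s - lam0 s - lamS s)) volume 0 t :=
      (hcψ.mul ((h1.sub h0).sub hS)).intervalIntegrable 0 t
    rw [intervalIntegral.integral_eq_sub_of_hasDerivAt hderiv hint]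
    simp only [hψ, hG0, hGS, hG1, cumHaz_zero, neg_zero, zero_sub, sub_zero, Real.exp_zero]
  -- rewrite the second cif integrand
  have hsplit : (∫ s in (0:ℝ)..t, E s * lamS s * (1 - Real.exp (-cumHaz1 (fun u _ => lam1 u) t s)))
      = (∫ s in (0:ℝ)..t, E s * lamS s)
        - Real.exp (-(G1 t)) * ∫ s in (0:ℝ)..t, ψ s * lamS s := by
    have heq : ∀ s : ℝ, E s * lamS s * (1 - Real.exp (-cumHaz1 (fun u _ => lam1 u) t s))
        = E s * lamS s - Real.exp (-(G1 t)) * (ψ s * lamS s) := by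
      intro s
      rw [hH1 s]
      have key : E s * Real.exp (-(G1 t - G1 s)) = Real.exp (-(G1 t)) * ψ s := by
        simp only [hE, hψ, ← Real.exp_add]
        congr 1
        ring
      calc E s * lamS s * (1 - Real.exp (-(G1 t - G1 s)))
          = E s * lamS s - E s * Real.exp (-(G1 t - G1 s)) * lamS s := by ring
        _ = E s * lamS s - Real.exp (-(G1 t)) * (ψ s * lamS s) := by rw [key]; ring
    rw [intervalIntegral.integral_congr (fun s _ => heq s)]
    rw [intervalIntegral.integral_sub (f := fun s => E s * lamS s)
      (g := fun s => Real.exp (-(G1 t)) * (ψ s * lamS s)) ((hcE.mul hS).intervalIntegrable 0 t)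
      ((continuous_const.mul (hcψ.mul hS)).intervalIntegrable 0 t)]
    rw [intervalIntegral.integral_const_mul]
  -- combine
  have hEsum : (∫ s in (0:ℝ)..t, E s * lam0 s) + (∫ s in (0:ℝ)..t, E s * lamS s) = 1 - E t := by
    rw [← intervalIntegral.integral_add (f := fun s => E s * lam0 s) (g := fun s => E s * lamS s) ((hcE.mul h0).intervalIntegrable 0 t)
      ((hcE.mul hS).intervalIntegrable 0 t)]
    rw [← hI1]
    exact intervalIntegral.integral_congr fun s _ => by ring
  have hψS : (∫ s in (0:ℝ)..t, ψ s * lamS s)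
      = (∫ s in (0:ℝ)..t, (lam1 s - lam0 s) * ψ s) - (ψ t - 1) := by
    rw [← hI2, ← intervalIntegral.integral_sub (f := fun s => (lam1 s - lam0 s) * ψ s)
      (g := fun s => ψ s * (lam1 s - lam0 s - lamS s))
      ((h1.sub h0).mul hcψ |>.intervalIntegrable 0 t)
      ((hcψ.mul ((h1.sub h0).sub hS)).intervalIntegrable 0 t)]
    exact intervalIntegral.integral_congr fun s _ => by ring
  have hEt : Real.exp (-(G1 t)) * ψ t = E t := by
    simp only [hE, hψ, ← Real.exp_add]
    congr 1
    ring
  unfold cif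
  rw [hsplit, hψS]
  have : (∫ s in (0:ℝ)..t, E s * lam0 s) + ((∫ s in (0:ℝ)..t, E s * lamS s)
      - Real.exp (-(G1 t)) * ((∫ s in (0:ℝ)..t, (lam1 s - lam0 s) * ψ s) - (ψ t - 1)))
      = ((∫ s in (0:ℝ)..t, E s * lam0 s) + (∫ s in (0:ℝ)..t, E s * lamS s))
        + Real.exp (-(G1 t)) * ψ t
        - Real.exp (-(G1 t)) * (1 + ∫ s in (0:ℝ)..t, (lam1 s - lam0 s) * ψ s) := by ring
  rw [this, hEsum, hEt]
  ring

/-- `cif` only depends on the hazards through their values on `[0,∞)`. -/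
lemma cif_exth (lamS lam0 lam1 : ℝ → ℝ) {t : ℝ} (ht : 0 ≤ t) :
    cif lamS lam0 (fun u _ => lam1 u) t
      = cif (exth lamS) (exth lam0) (fun u _ => exth lam1 u) t := by
  unfold cif
  congr 1
  · refine intervalIntegral.integral_congr fun s hs => ?_
    rw [Set.uIcc_of_le ht] at hs
    rw [cumHaz_exth lam0 hs.1, cumHaz_exth lamS hs.1, exth_eq lam0 hs.1]
  · refine intervalIntegral.integral_congr fun s hs => ?_
    rw [Set.uIcc_of_le ht] at hs
    rw [cumHaz_exth lam0 hs.1, cumHaz_exth lamS hs.1, exth_eq lamS hs.1]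
    have : cumHaz1 (fun u _ => lam1 u) t s = cumHaz1 (fun u _ => exth lam1 u) t s := by
      unfold cumHaz1
      refine (intervalIntegral.integral_congr fun u hu => ?_).symm
      rw [Set.uIcc_of_le hs.2] at hu
      exact exth_eq lam1 (le_trans hs.1 hu.1)
    rw [this]

set_option maxHeartbeats 1000000 in
/-- sign of the interventional indirect effect in the Markov case.
If `λ₁ ≥ λ₀` and `λ⋆ᵃ ≤ λ⋆ᵇ`, then `Fᵃ(t) ≤ Fᵇ(t)` for all `t ≥ 0`. -/
theorem cif_indirect_sign_markov (lamSa lamSb lam0 lam1 : ℝ → ℝ)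
    (hSacont : ContinuousOn lamSa (Set.Ici 0))
    (hSbcont : ContinuousOn lamSb (Set.Ici 0))
    (h0cont : ContinuousOn lam0 (Set.Ici 0))
    (h1cont : ContinuousOn lam1 (Set.Ici 0))
    (hSann : ∀ t ∈ Set.Ici (0:ℝ), 0 ≤ lamSa t)
    (hSbnn : ∀ t ∈ Set.Ici (0:ℝ), 0 ≤ lamSb t)
    (h0nn : ∀ t ∈ Set.Ici (0:ℝ), 0 ≤ lam0 t)
    (h1nn : ∀ t ∈ Set.Ici (0:ℝ), 0 ≤ lam1 t)
    (hmod : ∀ t ∈ Set.Ici (0:ℝ), lam0 t ≤ lam1 t)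
    (hSle : ∀ t ∈ Set.Ici (0:ℝ), lamSa t ≤ lamSb t) :
    ∀ t : ℝ, 0 ≤ t →
      cif lamSa lam0 (fun u _ => lam1 u) t ≤ cif lamSb lam0 (fun u _ => lam1 u) t := by
  intro t ht
  rw [cif_exth lamSa lam0 lam1 ht, cif_exth lamSb lam0 lam1 ht]
  have hSa := exth_cont hSacont
  have hSb := exth_cont hSbcont
  have h0 := exth_cont h0cont
  have h1 := exth_cont h1cont
  rw [cif_formula _ _ _ hSa h0 h1 t, cif_formula _ _ _ hSb h0 h1 t]
  have hexp : (0:ℝ) ≤ Real.exp (-(cumHaz (exth lam1) t)) := (Real.exp_pos _).le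
  refine sub_le_sub_left (mul_le_mul_of_nonneg_left (add_le_add_right ?_ 1) hexp) 1
  -- compare the integrals
  have hGle : ∀ s ∈ Set.Icc (0:ℝ) t, cumHaz (exth lamSa) s ≤ cumHaz (exth lamSb) s := by
    intro s hs
    unfold cumHaz
    refine intervalIntegral.integral_mono hs.1 (hSa.intervalIntegrable 0 s)
      (hSb.intervalIntegrable 0 s) fun u => hSle _ (le_max_right u 0)
  have hia : IntervalIntegrable (fun s => (exth lam1 s - exth lam0 s) *
      Real.exp (cumHaz (exth lam1) s - cumHaz (exth lam0) s - cumHaz (exth lamSa) s))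
      volume 0 t :=
    ((h1.sub h0).mul (((continuous_cumHaz h1).sub (continuous_cumHaz h0)).sub
      (continuous_cumHaz hSa)).rexp).intervalIntegrable 0 t
  have hib : IntervalIntegrable (fun s => (exth lam1 s - exth lam0 s) *
      Real.exp (cumHaz (exth lam1) s - cumHaz (exth lam0) s - cumHaz (exth lamSb) s))
      volume 0 t :=
    ((h1.sub h0).mul (((continuous_cumHaz h1).sub (continuous_cumHaz h0)).sub
      (continuous_cumHaz hSb)).rexp).intervalIntegrable 0 t
  refine intervalIntegral.integral_mono_on ht hib hia fun s hs => ?_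
  have hnn : 0 ≤ exth lam1 s - exth lam0 s := by
    have := hmod (max s 0) (le_max_right s 0)
    simpa [exth] using sub_nonneg.mpr this
  refine mul_le_mul_of_nonneg_left (Real.exp_le_exp.mpr ?_) hnn
  have := hGle s hs
  linarith
end
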